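/- Let x be a random vector in ℝ^p with E[x] = 0, finite fourth moments, finite covariance matrix Σ_x, and bounded fourth moments with constant C̃₄, and let Φ : ℝ → ℝ be twice differentiable with ‖Φ''‖_∞ ≤ M̄_{Φ,2}. Fix θ ∈ ℝ^p and let Y = Φ''(xᵀθ) x xᵀ, so that Y² = (Φ''(xᵀθ))² ‖x‖₂² x xᵀ. Then ‖E[Y²]‖₂ ≤ M̄_{Φ,2}² · √(C̃₄ · E[‖x‖₂⁴]) · λ_max(Σ_x). -/

import Mathlib

set_option maxHeartbeats 1000000


open MeasureTheory
open scoped RealInnerProductSpace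

private lemma cs_integral {Ω : Type*} [MeasurableSpace Ω] (μ : Measure Ω)
    {f g : Ω → ℝ} (hf0 : ∀ ω, 0 ≤ f ω) (hg0 : ∀ ω, 0 ≤ g ω)
    (hfm : AEStronglyMeasurable f μ) (hgm : AEStronglyMeasurable g μ)
    (hf2 : Integrable (fun ω => f ω ^ 2) μ) (hg2 : Integrable (fun ω => g ω ^ 2) μ) :
    ∫ ω, f ω * g ω ∂μ ≤ Real.sqrt (∫ ω, f ω ^ 2 ∂μ) * Real.sqrt (∫ ω, g ω ^ 2 ∂μ) := by
  have hpq : Real.HolderConjugate 2 2 := Real.holderConjugate_iff.mpr ⟨one_lt_two, by norm_num⟩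
  have h2 : ENNReal.ofReal (2 : ℝ) = 2 := by norm_num
  have hfmem : MemLp f (ENNReal.ofReal 2) μ := by
    rw [h2]; exact (memLp_two_iff_integrable_sq hfm).mpr hf2
  have hgmem : MemLp g (ENNReal.ofReal 2) μ := by
    rw [h2]; exact (memLp_two_iff_integrable_sq hgm).mpr hg2
  have := integral_mul_le_Lp_mul_Lq_of_nonneg hpq (Filter.Eventually.of_forall hf0)
    (Filter.Eventually.of_forall hg0) hfmem hgmem
  have hf2' : (fun ω => f ω ^ (2 : ℝ)) = fun ω => f ω ^ 2 := by
    funext ω; rw [show (2:ℝ) = ((2:ℕ):ℝ) by norm_num, Real.rpow_natCast]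
  have hg2' : (fun ω => g ω ^ (2 : ℝ)) = fun ω => g ω ^ 2 := by
    funext ω; rw [show (2:ℝ) = ((2:ℕ):ℝ) by norm_num, Real.rpow_natCast]
  rw [hf2', hg2'] at this
  rw [Real.sqrt_eq_rpow, Real.sqrt_eq_rpow]
  exact this

theorem glm_hessian_second_moment_bound {p : ℕ} {Ω : Type*} [MeasurableSpace Ω]
    (μ : Measure Ω) [IsProbabilityMeasure μ]
    (x : Ω → EuclideanSpace ℝ (Fin p)) (hx : Measurable x)
    (C4 M2 : ℝ) (hC4 : 0 < C4)
    (hmean : ∫ ω, x ω ∂μ = 0)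
    (hxint : Integrable (fun ω => ‖x ω‖ ^ 4) μ)
    (covX : EuclideanSpace ℝ (Fin p) →L[ℝ] EuclideanSpace ℝ (Fin p))
    (hcov : ∀ v : EuclideanSpace ℝ (Fin p), (∫ ω, ⟪x ω, v⟫ ^ 2 ∂μ) = ⟪covX v, v⟫)
    (h4 : ∀ v : EuclideanSpace ℝ (Fin p), ‖v‖ = 1 →
      (∫ ω, ⟪x ω, v⟫ ^ 4 ∂μ) ≤ C4 * (∫ ω, ⟪x ω, v⟫ ^ 2 ∂μ) ^ 2)
    (lamMax : ℝ)
    (hlamMax : lamMax = ⨆ v : {v : EuclideanSpace ℝ (Fin p) // ‖v‖ = 1}, ⟪covX v.1, v.1⟫)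
    (Φ : ℝ → ℝ) (hΦ : ContDiff ℝ 2 Φ)
    (hM2 : ∀ u : ℝ, |deriv (deriv Φ) u| ≤ M2)
    (θ : EuclideanSpace ℝ (Fin p))
    (Ysq : EuclideanSpace ℝ (Fin p) →L[ℝ] EuclideanSpace ℝ (Fin p))
    (hYsq : ∀ v w, ⟪Ysq v, w⟫
      = ∫ ω, (deriv (deriv Φ) ⟪x ω, θ⟫) ^ 2 * ‖x ω‖ ^ 2 * ⟪x ω, v⟫ * ⟪x ω, w⟫ ∂μ) :
    ‖Ysq‖ ≤ M2 ^ 2 * Real.sqrt (C4 * ∫ ω, ‖x ω‖ ^ 4 ∂μ) * lamMax := by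
  classical
  set K := Real.sqrt (C4 * ∫ ω, ‖x ω‖ ^ 4 ∂μ) with hKdef
  have hK0 : 0 ≤ K := Real.sqrt_nonneg _
  have hM2sq : 0 ≤ M2 ^ 2 := sq_nonneg _
  -- measurability helpers
  have hxin : ∀ v : EuclideanSpace ℝ (Fin p), Measurable fun ω => ⟪x ω, v⟫ :=
    fun v => hx.inner measurable_const
  have hint4 : (0:ℝ) ≤ ∫ ω, ‖x ω‖ ^ 4 ∂μ :=
    integral_nonneg fun ω => by positivity
  rcases Nat.eq_zero_or_pos p with hp | hp
  · -- degenerate case p = 0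
    subst hp
    have hE : IsEmpty {v : EuclideanSpace ℝ (Fin 0) // ‖v‖ = 1} := by
      refine ⟨fun v => ?_⟩
      have h0 : v.1 = 0 := Subsingleton.elim _ _
      have h1 := v.2
      rw [h0, norm_zero] at h1
      exact absurd h1 (by norm_num)
    have hlam : lamMax = 0 := by
      rw [hlamMax]
      exact Real.iSup_of_isEmpty _
    have hYz : ‖Ysq‖ ≤ 0 := by
      refine ContinuousLinearMap.opNorm_le_bound _ le_rfl fun v => ?_
      have : Ysq v = 0 := Subsingleton.elim _ _
      simp [this]
    rw [hlam, mul_zero]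
    exact hYz
  -- nondegenerate case
  have : NeZero p := ⟨hp.ne'⟩
  -- lamMax is an upper bound for the quadratic form on the sphere
  have hbdd : BddAbove (Set.range fun v : {v : EuclideanSpace ℝ (Fin p) // ‖v‖ = 1} =>
      ⟪covX v.1, v.1⟫) := by
    refine ⟨‖covX‖, ?_⟩
    rintro _ ⟨v, rfl⟩
    calc ⟪covX v.1, v.1⟫ ≤ ‖covX v.1‖ * ‖v.1‖ := real_inner_le_norm _ _
      _ ≤ (‖covX‖ * ‖v.1‖) * ‖v.1‖ :=
        mul_le_mul_of_nonneg_right (covX.le_opNorm _) (norm_nonneg _)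
      _ = ‖covX‖ := by rw [v.2]; ring
  have hlam_le : ∀ v : EuclideanSpace ℝ (Fin p), ‖v‖ = 1 → ⟪covX v, v⟫ ≤ lamMax := by
    intro v hv
    rw [hlamMax]
    exact le_ciSup hbdd ⟨v, hv⟩
  have hlam0 : 0 ≤ lamMax := by
    set v0 : EuclideanSpace ℝ (Fin p) := EuclideanSpace.single 0 (1:ℝ) with hv0
    have hn : ‖v0‖ = 1 := by rw [hv0, EuclideanSpace.norm_single]; norm_num
    have h1 : (0:ℝ) ≤ ∫ ω, ⟪x ω, v0⟫ ^ 2 ∂μ := integral_nonneg fun ω => sq_nonneg _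
    rw [hcov v0] at h1
    exact h1.trans (hlam_le v0 hn)
  -- pointwise bound |⟪x,v⟫| ≤ ‖x‖ for unit v
  have habs : ∀ (v : EuclideanSpace ℝ (Fin p)), ‖v‖ = 1 → ∀ ω, |⟪x ω, v⟫| ≤ ‖x ω‖ := by
    intro v hv ω
    calc |⟪x ω, v⟫| ≤ ‖x ω‖ * ‖v‖ := abs_real_inner_le_norm _ _
      _ = ‖x ω‖ := by rw [hv, mul_one]
  -- Step A : for unit v,  ∫ ‖x‖² ⟪x,v⟫² ≤ K * ⟪covX v, v⟫
  have stepA : ∀ (v : EuclideanSpace ℝ (Fin p)), ‖v‖ = 1 →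
      (∫ ω, ‖x ω‖ ^ 2 * ⟪x ω, v⟫ ^ 2 ∂μ) ≤ K * ⟪covX v, v⟫ := by
    intro v hv
    have hiv4 : Integrable (fun ω => ⟪x ω, v⟫ ^ 4) μ := by
      refine hxint.mono ((hxin v).pow_const 4).aestronglyMeasurable
        (Filter.Eventually.of_forall fun ω => ?_)
      have h := habs v hv ω
      rw [Real.norm_eq_abs, Real.norm_eq_abs, abs_pow, abs_of_nonneg (by positivity : (0:ℝ) ≤ ‖x ω‖ ^ 4)]
      exact pow_le_pow_left₀ (abs_nonneg _) h 4
    have hsq4 : Integrable (fun ω => (‖x ω‖ ^ 2) ^ 2) μ := by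
      refine hxint.congr ?_
      exact Filter.Eventually.of_forall fun ω => by ring
    have hcs := cs_integral μ (f := fun ω => ‖x ω‖ ^ 2) (g := fun ω => ⟪x ω, v⟫ ^ 2)
      (fun ω => sq_nonneg _) (fun ω => sq_nonneg _)
      ((hx.norm.pow_const 2).aestronglyMeasurable)
      (((hxin v).pow_const 2).aestronglyMeasurable)
      hsq4 (by refine hiv4.congr ?_; exact Filter.Eventually.of_forall fun ω => by ring)
    have he1 : (∫ ω, (‖x ω‖ ^ 2) ^ 2 ∂μ) = ∫ ω, ‖x ω‖ ^ 4 ∂μ :=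
      integral_congr_ae (Filter.Eventually.of_forall fun ω => by ring)
    have he2 : (∫ ω, (⟪x ω, v⟫ ^ 2) ^ 2 ∂μ) = ∫ ω, ⟪x ω, v⟫ ^ 4 ∂μ :=
      integral_congr_ae (Filter.Eventually.of_forall fun ω => by ring)
    rw [he1, he2] at hcs
    have hq0 : (0:ℝ) ≤ ∫ ω, ⟪x ω, v⟫ ^ 2 ∂μ := integral_nonneg fun ω => sq_nonneg _
    have hsq : Real.sqrt (∫ ω, ⟪x ω, v⟫ ^ 4 ∂μ)
        ≤ Real.sqrt C4 * (∫ ω, ⟪x ω, v⟫ ^ 2 ∂μ) := by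
      calc Real.sqrt (∫ ω, ⟪x ω, v⟫ ^ 4 ∂μ)
          ≤ Real.sqrt (C4 * (∫ ω, ⟪x ω, v⟫ ^ 2 ∂μ) ^ 2) := Real.sqrt_le_sqrt (h4 v hv)
        _ = Real.sqrt C4 * (∫ ω, ⟪x ω, v⟫ ^ 2 ∂μ) := by
            rw [Real.sqrt_mul hC4.le, Real.sqrt_sq hq0]
    calc (∫ ω, ‖x ω‖ ^ 2 * ⟪x ω, v⟫ ^ 2 ∂μ)
        ≤ Real.sqrt (∫ ω, ‖x ω‖ ^ 4 ∂μ) * Real.sqrt (∫ ω, ⟪x ω, v⟫ ^ 4 ∂μ) := hcs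
      _ ≤ Real.sqrt (∫ ω, ‖x ω‖ ^ 4 ∂μ) * (Real.sqrt C4 * (∫ ω, ⟪x ω, v⟫ ^ 2 ∂μ)) :=
          mul_le_mul_of_nonneg_left hsq (Real.sqrt_nonneg _)
      _ = K * (∫ ω, ⟪x ω, v⟫ ^ 2 ∂μ) := by
          rw [hKdef, Real.sqrt_mul hC4.le]; ring
      _ = K * ⟪covX v, v⟫ := by rw [hcov v]
  -- Step B : for unit v, w,  |⟪Ysq v, w⟫| ≤ M2² * (K * lamMax)
  have stepB : ∀ (v w : EuclideanSpace ℝ (Fin p)), ‖v‖ = 1 → ‖w‖ = 1 →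
      |⟪Ysq v, w⟫| ≤ M2 ^ 2 * (K * lamMax) := by
    intro v w hv hw
    have hM2' : 0 ≤ M2 := (abs_nonneg _).trans (hM2 0)
    -- integrability of the dominating function
    have hintM : Integrable (fun ω => M2 ^ 2 * ((‖x ω‖ * |⟪x ω, v⟫|) * (‖x ω‖ * |⟪x ω, w⟫|))) μ := by
      refine (hxint.const_mul (M2 ^ 2)).mono' ?_ (Filter.Eventually.of_forall fun ω => ?_)
      · exact (measurable_const.mul (((hx.norm.mul (hxin v).abs)).mul
          (hx.norm.mul (hxin w).abs))).aestronglyMeasurable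
      · have h1 := habs v hv ω; have h2 := habs w hw ω
        have hn : (0:ℝ) ≤ ‖x ω‖ := norm_nonneg _
        have hv0 : (0:ℝ) ≤ |⟪x ω, v⟫| := abs_nonneg _
        have hw0 : (0:ℝ) ≤ |⟪x ω, w⟫| := abs_nonneg _
        rw [Real.norm_eq_abs, abs_of_nonneg (by positivity)]
        have hx1 : ‖x ω‖ * |⟪x ω, v⟫| ≤ ‖x ω‖ * ‖x ω‖ := mul_le_mul_of_nonneg_left h1 hn
        have hx2 : ‖x ω‖ * |⟪x ω, w⟫| ≤ ‖x ω‖ * ‖x ω‖ := mul_le_mul_of_nonneg_left h2 hn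
        have hx3 : (‖x ω‖ * |⟪x ω, v⟫|) * (‖x ω‖ * |⟪x ω, w⟫|) ≤ (‖x ω‖ * ‖x ω‖) * (‖x ω‖ * ‖x ω‖) :=
          mul_le_mul hx1 hx2 (mul_nonneg hn hw0) (mul_nonneg hn hn)
        calc M2 ^ 2 * ((‖x ω‖ * |⟪x ω, v⟫|) * (‖x ω‖ * |⟪x ω, w⟫|))
            ≤ M2 ^ 2 * ((‖x ω‖ * ‖x ω‖) * (‖x ω‖ * ‖x ω‖)) :=
              mul_le_mul_of_nonneg_left hx3 hM2sq
          _ = M2 ^ 2 * ‖x ω‖ ^ 4 := by ring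
    -- pointwise bound on the integrand
    have hpt : ∀ ω, |(deriv (deriv Φ) ⟪x ω, θ⟫) ^ 2 * ‖x ω‖ ^ 2 * ⟪x ω, v⟫ * ⟪x ω, w⟫|
        ≤ M2 ^ 2 * ((‖x ω‖ * |⟪x ω, v⟫|) * (‖x ω‖ * |⟪x ω, w⟫|)) := by
      intro ω
      have hd := hM2 ⟪x ω, θ⟫
      have hd2 : (deriv (deriv Φ) ⟪x ω, θ⟫) ^ 2 ≤ M2 ^ 2 := by
        rw [← sq_abs]; exact pow_le_pow_left₀ (abs_nonneg _) hd 2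
      have hn : (0:ℝ) ≤ ‖x ω‖ := norm_nonneg _
      rw [abs_mul, abs_mul, abs_mul, abs_of_nonneg (sq_nonneg (deriv (deriv Φ) ⟪x ω, θ⟫)),
        abs_of_nonneg (sq_nonneg (‖x ω‖))]
      have hbase : (0:ℝ) ≤ ‖x ω‖ ^ 2 * |⟪x ω, v⟫| * |⟪x ω, w⟫| := by positivity
      calc (deriv (deriv Φ) ⟪x ω, θ⟫) ^ 2 * ‖x ω‖ ^ 2 * |⟪x ω, v⟫| * |⟪x ω, w⟫|
          = (deriv (deriv Φ) ⟪x ω, θ⟫) ^ 2 * (‖x ω‖ ^ 2 * |⟪x ω, v⟫| * |⟪x ω, w⟫|) := by ring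
        _ ≤ M2 ^ 2 * (‖x ω‖ ^ 2 * |⟪x ω, v⟫| * |⟪x ω, w⟫|) :=
            mul_le_mul_of_nonneg_right hd2 hbase
        _ = M2 ^ 2 * ((‖x ω‖ * |⟪x ω, v⟫|) * (‖x ω‖ * |⟪x ω, w⟫|)) := by ring
    have h1 : |⟪Ysq v, w⟫| ≤ ∫ ω, M2 ^ 2 * ((‖x ω‖ * |⟪x ω, v⟫|) * (‖x ω‖ * |⟪x ω, w⟫|)) ∂μ := by
      rw [hYsq v w]
      calc |∫ ω, (deriv (deriv Φ) ⟪x ω, θ⟫) ^ 2 * ‖x ω‖ ^ 2 * ⟪x ω, v⟫ * ⟪x ω, w⟫ ∂μ|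
          ≤ ∫ ω, |(deriv (deriv Φ) ⟪x ω, θ⟫) ^ 2 * ‖x ω‖ ^ 2 * ⟪x ω, v⟫ * ⟪x ω, w⟫| ∂μ := by
            simpa only [Real.norm_eq_abs] using
              norm_integral_le_integral_norm
                (fun ω => (deriv (deriv Φ) ⟪x ω, θ⟫) ^ 2 * ‖x ω‖ ^ 2 * ⟪x ω, v⟫ * ⟪x ω, w⟫) (μ := μ)
        _ ≤ ∫ ω, M2 ^ 2 * ((‖x ω‖ * |⟪x ω, v⟫|) * (‖x ω‖ * |⟪x ω, w⟫|)) ∂μ :=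
            integral_mono_of_nonneg (Filter.Eventually.of_forall fun ω => abs_nonneg _)
              hintM (Filter.Eventually.of_forall hpt)
    rw [integral_const_mul] at h1
    -- second Cauchy-Schwarz
    have hintsq : ∀ (u : EuclideanSpace ℝ (Fin p)), ‖u‖ = 1 →
        Integrable (fun ω => (‖x ω‖ * |⟪x ω, u⟫|) ^ 2) μ := by
      intro u hu
      refine hxint.mono ((hx.norm.mul (hxin u).abs).pow_const 2).aestronglyMeasurable
        (Filter.Eventually.of_forall fun ω => ?_)
      have h := habs u hu ω
      have hn : (0:ℝ) ≤ ‖x ω‖ := norm_nonneg _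
      rw [Real.norm_eq_abs, Real.norm_eq_abs, abs_of_nonneg (by positivity : (0:ℝ) ≤ (‖x ω‖ * |⟪x ω, u⟫|) ^ 2),
        abs_of_nonneg (by positivity : (0:ℝ) ≤ ‖x ω‖ ^ 4)]
      have h2 : |⟪x ω, u⟫| ^ 2 ≤ ‖x ω‖ ^ 2 := pow_le_pow_left₀ (abs_nonneg _) h 2
      calc (‖x ω‖ * |⟪x ω, u⟫|) ^ 2 = ‖x ω‖ ^ 2 * |⟪x ω, u⟫| ^ 2 := by ring
        _ ≤ ‖x ω‖ ^ 2 * ‖x ω‖ ^ 2 := mul_le_mul_of_nonneg_left h2 (sq_nonneg _)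
        _ = ‖x ω‖ ^ 4 := by ring
    have hcs2 := cs_integral μ (f := fun ω => ‖x ω‖ * |⟪x ω, v⟫|)
      (g := fun ω => ‖x ω‖ * |⟪x ω, w⟫|)
      (fun ω => by positivity) (fun ω => by positivity)
      ((hx.norm.mul (hxin v).abs).aestronglyMeasurable)
      ((hx.norm.mul (hxin w).abs).aestronglyMeasurable)
      (hintsq v hv) (hintsq w hw)
    have hsqeq : ∀ (u : EuclideanSpace ℝ (Fin p)),
        (∫ ω, (‖x ω‖ * |⟪x ω, u⟫|) ^ 2 ∂μ) = ∫ ω, ‖x ω‖ ^ 2 * ⟪x ω, u⟫ ^ 2 ∂μ := by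
      intro u
      refine integral_congr_ae (Filter.Eventually.of_forall fun ω => ?_)
      simp only [mul_pow, sq_abs]
    rw [hsqeq v, hsqeq w] at hcs2
    have hboundu : ∀ (u : EuclideanSpace ℝ (Fin p)), ‖u‖ = 1 →
        Real.sqrt (∫ ω, ‖x ω‖ ^ 2 * ⟪x ω, u⟫ ^ 2 ∂μ) ≤ Real.sqrt (K * lamMax) := by
      intro u hu
      exact Real.sqrt_le_sqrt ((stepA u hu).trans
        (mul_le_mul_of_nonneg_left (hlam_le u hu) hK0))
    have hKl0 : 0 ≤ K * lamMax := mul_nonneg hK0 hlam0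
    have h2 : (∫ ω, (‖x ω‖ * |⟪x ω, v⟫|) * (‖x ω‖ * |⟪x ω, w⟫|) ∂μ) ≤ K * lamMax := by
      calc (∫ ω, (‖x ω‖ * |⟪x ω, v⟫|) * (‖x ω‖ * |⟪x ω, w⟫|) ∂μ)
          ≤ Real.sqrt (∫ ω, ‖x ω‖ ^ 2 * ⟪x ω, v⟫ ^ 2 ∂μ)
            * Real.sqrt (∫ ω, ‖x ω‖ ^ 2 * ⟪x ω, w⟫ ^ 2 ∂μ) := hcs2
        _ ≤ Real.sqrt (K * lamMax) * Real.sqrt (K * lamMax) :=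
            mul_le_mul (hboundu v hv) (hboundu w hw) (Real.sqrt_nonneg _) (Real.sqrt_nonneg _)
        _ = K * lamMax := Real.mul_self_sqrt hKl0
    calc |⟪Ysq v, w⟫| ≤ M2 ^ 2 * ∫ ω, (‖x ω‖ * |⟪x ω, v⟫|) * (‖x ω‖ * |⟪x ω, w⟫|) ∂μ := h1
      _ ≤ M2 ^ 2 * (K * lamMax) := mul_le_mul_of_nonneg_left h2 hM2sq
  -- extend to all vectors by homogeneity
  have stepC : ∀ v w : EuclideanSpace ℝ (Fin p),
      |⟪Ysq v, w⟫| ≤ M2 ^ 2 * (K * lamMax) * ‖v‖ * ‖w‖ := by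
    intro v w
    rcases eq_or_ne v 0 with rfl | hv0
    · simp
    rcases eq_or_ne w 0 with rfl | hw0
    · simp
    have hnv : (0:ℝ) < ‖v‖ := norm_pos_iff.mpr hv0
    have hnw : (0:ℝ) < ‖w‖ := norm_pos_iff.mpr hw0
    set v' := (‖v‖)⁻¹ • v with hv'
    set w' := (‖w‖)⁻¹ • w with hw'
    have hnv' : ‖v'‖ = 1 := by
      rw [hv', norm_smul, norm_inv, norm_norm, inv_mul_cancel₀ hnv.ne']
    have hnw' : ‖w'‖ = 1 := by
      rw [hw', norm_smul, norm_inv, norm_norm, inv_mul_cancel₀ hnw.ne']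
    have key := stepB v' w' hnv' hnw'
    have hlin : ⟪Ysq v', w'⟫ = (‖v‖)⁻¹ * ((‖w‖)⁻¹ * ⟪Ysq v, w⟫) := by
      rw [hv', hw', Ysq.map_smul, real_inner_smul_left, real_inner_smul_right]
    rw [hlin] at key
    rw [abs_mul, abs_mul, abs_inv, abs_inv, abs_of_pos hnv, abs_of_pos hnw] at key
    have := mul_le_mul_of_nonneg_left key (le_of_lt (mul_pos hnv hnw))
    calc |⟪Ysq v, w⟫| = (‖v‖ * ‖w‖) * ((‖v‖)⁻¹ * ((‖w‖)⁻¹ * |⟪Ysq v, w⟫|)) := by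
          field_simp
      _ ≤ (‖v‖ * ‖w‖) * (M2 ^ 2 * (K * lamMax)) := this
      _ = M2 ^ 2 * (K * lamMax) * ‖v‖ * ‖w‖ := by ring
  -- conclude the operator norm bound
  have hB0 : 0 ≤ M2 ^ 2 * (K * lamMax) := mul_nonneg hM2sq (mul_nonneg hK0 hlam0)
  have hfinal : ‖Ysq‖ ≤ M2 ^ 2 * (K * lamMax) := by
    refine ContinuousLinearMap.opNorm_le_bound _ hB0 fun v => ?_
    rcases eq_or_ne (Ysq v) 0 with h0 | h0
    · rw [h0, norm_zero]; positivity
    have hpos : (0:ℝ) < ‖Ysq v‖ := norm_pos_iff.mpr h0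
    have h1 : ‖Ysq v‖ ^ 2 = ⟪Ysq v, Ysq v⟫ := (real_inner_self_eq_norm_sq _).symm
    have h2 : ‖Ysq v‖ ^ 2 ≤ M2 ^ 2 * (K * lamMax) * ‖v‖ * ‖Ysq v‖ := by
      rw [h1]
      exact (le_abs_self _).trans (stepC v (Ysq v))
    have h3 : ‖Ysq v‖ * ‖Ysq v‖ ≤ (M2 ^ 2 * (K * lamMax) * ‖v‖) * ‖Ysq v‖ := by
      nlinarith
    exact le_of_mul_le_mul_right h3 hpos
  calc ‖Ysq‖ ≤ M2 ^ 2 * (K * lamMax) := hfinal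
    _ = M2 ^ 2 * K * lamMax := by ring
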